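/- Let n ≥ 1 and 1 ≤ t ≤ n+1. Then Bob(T_n(t)) holds if and only if t ≤ ⌊n/2⌋ + 1. -/
import Mathlib


/-- The board `[n] = {1, …, n}` as a finite set of natural numbers. -/
def board (n : ℕ) : Finset ℕ := Finset.Icc 1 n

/-- The order-preserving relabelling of `[n] \ {x}` onto `[n-1]`:
elements below `x` are unchanged, elements above `x` drop by one. -/
def stdElt (x r : ℕ) : ℕ := if r < x then r else r - 1

/-- Standardise a set avoiding `x`: relabel it via `stdElt x`. -/
def stdSet (x : ℕ) (S : Finset ℕ) : Finset ℕ := S.image (stdElt x)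

/-- The standardised section `F_x^+ = { S \ {x} : x ∈ S ∈ F }`,
viewed as a family of subsets of `[n-1]`. -/
def secPlus (F : Set (Finset ℕ)) (x : ℕ) : Set (Finset ℕ) :=
  {T | ∃ S ∈ F, x ∈ S ∧ T = stdSet x (S.erase x)}

/-- The standardised section `F_x^- = { S ∈ F : x ∉ S }`,
viewed as a family of subsets of `[n-1]`. -/
def secMinus (F : Set (Finset ℕ)) (x : ℕ) : Set (Finset ℕ) :=
  {T | ∃ S ∈ F, x ∉ S ∧ T = stdSet x S}

mutual
  /-- `AliceWins n k F`: Alice wins her `F`-game, where `F` is a family of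
  `k`-subsets of `[n]`.  Terminal games (`k = 0` or `k = n`) are won iff `F`
  is nonempty; otherwise Alice needs a first offer `x` such that Bob wins both
  his `F_x^+`-game and his `F_x^-`-game. -/
  def AliceWins (n k : ℕ) (F : Set (Finset ℕ)) : Prop :=
    if h : k = 0 ∨ n ≤ k then F.Nonempty
    else ∃ x ∈ board n,
      BobWins (n - 1) (k - 1) (secPlus F x) ∧ BobWins (n - 1) k (secMinus F x)
  termination_by n
  decreasing_by all_goals omega

  /-- `BobWins n k F`: Bob wins his `F`-game, where `F` is a family of
  `k`-subsets of `[n]`.  Terminal games (`k = 0` or `k = n`) are won iff `F`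
  is nonempty; otherwise Bob needs, for every first offer `x`, that Alice wins
  her `F_x^+`-game or her `F_x^-`-game. -/
  def BobWins (n k : ℕ) (F : Set (Finset ℕ)) : Prop :=
    if h : k = 0 ∨ n ≤ k then F.Nonempty
    else ∀ x ∈ board n,
      AliceWins (n - 1) (k - 1) (secPlus F x) ∨ AliceWins (n - 1) k (secMinus F x)
  termination_by n
  decreasing_by all_goals omega
end

/-- `S ⪯ T` in the pointwise order: the increasing enumerations of `S` and `T`
have the same length and are pointwise `≤`. -/
def PointwiseLE (S T : Finset ℕ) : Prop :=
  List.Forall₂ (· ≤ ·) (S.sort (· ≤ ·)) (T.sort (· ≤ ·))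

/-- `F` consists of `k`-element subsets of `[n]`. -/
def IsFamilyOn (n k : ℕ) (F : Set (Finset ℕ)) : Prop :=
  ∀ S ∈ F, S ⊆ board n ∧ S.card = k

/-- `F` is pointwise-increasing as a family of `k`-subsets of `[n]`:
it is upwards closed in the pointwise order. -/
def IsIncreasingFamily (n k : ℕ) (F : Set (Finset ℕ)) : Prop :=
  ∀ S T : Finset ℕ, S ∈ F → T ⊆ board n → T.card = k → PointwiseLE S T → T ∈ F

/-- The singleton family `T_n(t)`. -/
def Tfam (n t : ℕ) : Set (Finset ℕ) := {S : Finset ℕ | ∃ r : ℕ, t ≤ r ∧ r ≤ n ∧ S = {r}}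

lemma stdSet_singleton (x r : ℕ) : stdSet x {r} = {stdElt x r} := by
  simp [stdSet]

lemma aliceWins_zero (n : ℕ) (F : Set (Finset ℕ)) : AliceWins n 0 F ↔ F.Nonempty := by
  rw [AliceWins]; simp

lemma bobWins_zero (n : ℕ) (F : Set (Finset ℕ)) : BobWins n 0 F ↔ F.Nonempty := by
  rw [BobWins]; simp

lemma secPlus_Tfam_nonempty (n t x : ℕ) (h : t ≤ x) (h2 : x ≤ n) :
    (secPlus (Tfam n t) x).Nonempty := by
  refine ⟨∅, {x}, ⟨x, h, h2, rfl⟩, by simp, ?_⟩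
  simp [stdSet]

lemma secPlus_Tfam_empty (n t x : ℕ) (h : ¬ t ≤ x) :
    ¬ (secPlus (Tfam n t) x).Nonempty := by
  rintro ⟨T, S, ⟨r, hr1, hr2, rfl⟩, hx, -⟩
  simp only [Finset.mem_singleton] at hx
  omega

lemma secMinus_Tfam_lt (n t x : ℕ) (h1 : 1 ≤ x) (hx : x < t) :
    secMinus (Tfam n t) x = Tfam (n-1) (t-1) := by
  ext T
  constructor
  · rintro ⟨S, ⟨r, hr1, hr2, rfl⟩, hxS, rfl⟩
    refine ⟨r - 1, by omega, by omega, ?_⟩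
    rw [stdSet_singleton]
    congr 1
    unfold stdElt
    rw [if_neg (by omega)]
  · rintro ⟨s, hs1, hs2, rfl⟩
    refine ⟨{s+1}, ⟨s+1, by omega, by omega, rfl⟩, by simp only [Finset.mem_singleton]; omega, ?_⟩
    rw [stdSet_singleton]
    congr 1
    unfold stdElt
    rw [if_neg (by omega)]
    omega

lemma secMinus_Tfam_ge (n t x : ℕ) (h1 : 1 ≤ x) (hx : t ≤ x) (h2 : x ≤ n) :
    secMinus (Tfam n t) x = Tfam (n-1) t := by
  ext T
  constructor
  · rintro ⟨S, ⟨r, hr1, hr2, rfl⟩, hxS, rfl⟩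
    simp only [Finset.mem_singleton] at hxS
    rw [stdSet_singleton]
    rcases Nat.lt_or_ge r x with h | h
    · exact ⟨r, by omega, by omega, by unfold stdElt; rw [if_pos h]⟩
    · exact ⟨r - 1, by omega, by omega, by unfold stdElt; rw [if_neg (by omega)]⟩
  · rintro ⟨s, hs1, hs2, rfl⟩
    rcases Nat.lt_or_ge s x with h | h
    · refine ⟨{s}, ⟨s, by omega, by omega, rfl⟩, by simp only [Finset.mem_singleton]; omega, ?_⟩
      rw [stdSet_singleton]
      congr 1
      unfold stdElt
      rw [if_pos h]
    · refine ⟨{s+1}, ⟨s+1, by omega, by omega, rfl⟩, by simp only [Finset.mem_singleton]; omega, ?_⟩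
      rw [stdSet_singleton]
      congr 1
      unfold stdElt
      rw [if_neg (by omega)]
      omega

lemma tfam_main : ∀ n, 1 ≤ n → ∀ t, 1 ≤ t →
    (BobWins n 1 (Tfam n t) ↔ t ≤ n / 2 + 1) ∧
    (AliceWins n 1 (Tfam n t) ↔ t ≤ (n + 1) / 2) := by
  intro n
  induction n using Nat.strong_induction_on with
  | _ n IH =>
    intro hn t ht
    rcases Nat.lt_or_ge n 2 with h2 | h2
    · -- n = 1 : terminal case
      have hn1 : n = 1 := by omega
      subst hn1
      have hiff : (Tfam 1 t).Nonempty ↔ t ≤ 1 := by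
        constructor
        · rintro ⟨S, r, hr1, hr2, rfl⟩; omega
        · intro h; exact ⟨{1}, 1, by omega, le_rfl, rfl⟩
      constructor
      · rw [BobWins, dif_pos (by omega)]
        rw [hiff]
      · rw [AliceWins, dif_pos (by omega)]
        rw [hiff]
    · constructor
      · -- Bob
        rw [BobWins, dif_neg (by omega)]
        constructor
        · intro h
          rcases Nat.lt_or_ge 1 t with h1t | h1t
          · have := h 1 (by simp [board]; omega)
            rcases this with hA | hA
            · rw [aliceWins_zero] at hA
              exact absurd hA (secPlus_Tfam_empty _ _ _ (by omega))
            · rw [secMinus_Tfam_lt n t 1 le_rfl h1t] at hA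
              have := ((IH (n-1) (by omega) (by omega) (t-1) (by omega)).2).mp hA
              omega
          · omega
        · intro hb x hx
          simp only [board, Finset.mem_Icc] at hx
          rcases Nat.lt_or_ge x t with h | h
          · right
            rw [secMinus_Tfam_lt n t x hx.1 h]
            exact ((IH (n-1) (by omega) (by omega) (t-1) (by omega)).2).mpr (by omega)
          · left
            rw [aliceWins_zero]
            exact secPlus_Tfam_nonempty n t x h hx.2
      · -- Alice
        rw [AliceWins, dif_neg (by omega)]
        constructor
        · rintro ⟨x, hx, hp, hm⟩
          simp only [board, Finset.mem_Icc] at hx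
          rw [bobWins_zero] at hp
          have htx : t ≤ x := by
            by_contra hc
            exact secPlus_Tfam_empty n t x hc hp
          rw [secMinus_Tfam_ge n t x hx.1 htx hx.2] at hm
          have := ((IH (n-1) (by omega) (by omega) t ht).1).mp hm
          omega
        · intro h
          refine ⟨t, by simp [board]; omega, ?_, ?_⟩
          · rw [bobWins_zero]
            exact secPlus_Tfam_nonempty n t t le_rfl (by omega)
          · rw [secMinus_Tfam_ge n t t ht le_rfl (by omega)]
            exact ((IH (n-1) (by omega) (by omega) t ht).1).mpr (by omega)

/-- Bob wins his game on the singleton family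
`T_n(t) = { {r} : t ≤ r ≤ n }` if and only if `t ≤ ⌊n/2⌋ + 1`. -/
theorem bob_singleton_family (n t : ℕ) (hn : 1 ≤ n) (ht1 : 1 ≤ t) (ht : t ≤ n + 1) :
    BobWins n 1 {S : Finset ℕ | ∃ r : ℕ, t ≤ r ∧ r ≤ n ∧ S = {r}} ↔
      t ≤ n / 2 + 1 := by
  exact (tfam_main n hn t ht1).1
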